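/- Let (R₁, R₂, R₃) be pairwise commuting bounded linear operators on a complex Hilbert space H. The following are equivalent: (i) R₃ is unitary and there exist a complex Hilbert space K, a linear isometry J : H → K, and pairwise commuting normal bounded operators (N₁, N₂, N₃) on K with N₃ unitary, N₂ = N₂*N₃, ‖N₂‖ ≤ 2 and N₁*N₁ = I_K − (1/4)N₂*N₂, such that Nᵢ ∘ J = J ∘ Rᵢ for i = 1, 2, 3; (ii) R₂ and R₃ are normal, R₃ is unitary, R₂ = R₂*R₃, ‖R₂‖ ≤ 2, and R₁*R₁ = I_H − (1/4)R₂*R₂. -/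

import Mathlib

set_option linter.unusedSectionVars false
set_option maxHeartbeats 1000000

open ContinuousLinearMap Polynomial

universe u

/-- If `b` commutes with `a`, then `b` commutes with `cfc f a`. -/
lemma commute_cfc_aux {𝔸 : Type*} [CStarAlgebra 𝔸] {a : 𝔸} (b : 𝔸)
    (hab : Commute a b) (f : ℝ → ℝ) : Commute (cfc f a) b := by
  by_cases ha : IsSelfAdjoint a
  · by_cases hf : ContinuousOn f (spectrum ℝ a)
    · rw [cfc_apply f a ha hf]
      have key : ∀ g : C(spectrum ℝ a, ℝ), Commute (cfcHom ha g) b := by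
        intro g
        let S : Subalgebra ℝ C(spectrum ℝ a, ℝ) :=
          (Subalgebra.centralizer ℝ {b}).comap (cfcHom ha (R := ℝ)).toAlgHom
        have hle : polynomialFunctions (spectrum ℝ a) ≤ S := by
          rintro - ⟨p, -, rfl⟩
          simp only [S, Subalgebra.mem_comap, Subalgebra.mem_centralizer_iff,
            Set.mem_singleton_iff, forall_eq]
          have h1 : cfcHom ha (p.toContinuousMapOn (spectrum ℝ a))
              = Polynomial.aeval a p := by
            have h2 := cfc_polynomial p a ha
            rw [cfc_apply (fun x : ℝ => p.eval x) a ha (by fun_prop)] at h2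
            rw [← h2]
            congr 1
          have h3 : (aeval a) p ∈ Subalgebra.centralizer ℝ {b} := by
            refine Algebra.adjoin_le ?_ (Polynomial.aeval_mem_adjoin_singleton ℝ a)
            rintro x hx
            rw [Set.mem_singleton_iff] at hx
            subst hx
            rw [SetLike.mem_coe, Subalgebra.mem_centralizer_iff]
            rintro y hy
            rw [Set.mem_singleton_iff] at hy
            subst hy
            exact hab.symm
          change b * (cfcHom ha) (p.toContinuousMapOn (spectrum ℝ a)) =
            (cfcHom ha) (p.toContinuousMapOn (spectrum ℝ a)) * b
          rw [h1]
          exact (Subalgebra.mem_centralizer_iff ℝ).mp h3 b rfl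
        have hclosed : IsClosed (S : Set C(spectrum ℝ a, ℝ)) := by
          have h4 : (S : Set C(spectrum ℝ a, ℝ)) =
              ⇑(cfcHom ha (R := ℝ)) ⁻¹' {x | b * x = x * b} := by
            ext q
            simp [S, Subalgebra.mem_comap, Subalgebra.mem_centralizer_iff,
              Set.mem_centralizer_iff]
          rw [h4]
          exact (isClosed_eq (continuous_mul_left b) (continuous_mul_right b)).preimage
            (cfcHom_continuous ha)
        have htop : (⊤ : Subalgebra ℝ C(spectrum ℝ a, ℝ)) ≤ S := by
          rw [← polynomialFunctions.topologicalClosure (spectrum ℝ a)]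
          exact Subalgebra.topologicalClosure_minimal hle hclosed
        have hg : g ∈ S := htop Algebra.mem_top
        exact ((Subalgebra.mem_centralizer_iff ℝ).mp hg b rfl).symm
      exact key _
    · rw [cfc_apply_of_not_continuousOn a hf]; exact Commute.zero_left b
  · rw [cfc_apply_of_not_predicate a ha]; exact Commute.zero_left b

/-- A selfadjoint element whose cube is nonnegative is nonnegative. -/
lemma nonneg_of_pow_three {𝔸 : Type*} [CStarAlgebra 𝔸] [PartialOrder 𝔸] [StarOrderedRing 𝔸]
    {s : 𝔸} (hs : IsSelfAdjoint s) (h : 0 ≤ s ^ 3) : 0 ≤ s := by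
  have h3 : s ^ 3 = cfc (fun t : ℝ => t ^ 3) s := (cfc_pow_id s 3 hs).symm
  rw [h3, cfc_nonneg_iff (fun t : ℝ => t ^ 3) s (by fun_prop) hs] at h
  have h5 : 0 ≤ cfc (fun t : ℝ => t) s :=
    cfc_nonneg (fun x hx => (Odd.pow_nonneg_iff (by decide : Odd 3)).mp (h x hx))
  rwa [cfc_id' ℝ s hs] at h5

/-- A quasinormal element is hyponormal. -/
lemma quasinormal_hyponormal {𝔸 : Type*} [CStarAlgebra 𝔸] [PartialOrder 𝔸] [StarOrderedRing 𝔸]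
    (T : 𝔸) (hq : T * (star T * T) = (star T * T) * T) :
    0 ≤ star T * T - T * star T := by
  set P := star T * T with hPdef
  set X := T * star T with hXdef
  have hXsq : X * X = P * X := by
    calc X * X = T * (star T * T) * star T := by
          simp only [hXdef, hPdef, mul_assoc]
    _ = P * T * star T := by rw [hq]
    _ = P * X := by simp only [hXdef, mul_assoc]
  have hsP : IsSelfAdjoint P := IsSelfAdjoint.star_mul_self T
  have hsX : IsSelfAdjoint X := IsSelfAdjoint.mul_star_self T
  have hsS : IsSelfAdjoint (P - X) := hsP.sub hsX
  have hSX : (P - X) * X = 0 := by rw [sub_mul, hXsq, sub_self]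
  have hS3 : (P - X) ^ 3 = (P - X) * P * (P - X) := by
    have h6 : (P - X) * (P - X) = (P - X) * P := by
      rw [mul_sub, hSX, sub_zero]
    calc (P - X) ^ 3 = (P - X) * (P - X) * (P - X) := by rw [pow_succ, sq]
    _ = (P - X) * P * (P - X) := by rw [h6]
  have hP0 : 0 ≤ P := star_mul_self_nonneg T
  have h7 : 0 ≤ (P - X) ^ 3 := by
    rw [hS3]
    have h8 := star_left_conjugate_nonneg hP0 (P - X)
    rwa [hsS.star_eq] at h8
  exact nonneg_of_pow_three hsS h7

variable {H : Type u} [NormedAddCommGroup H] [InnerProductSpace ℂ H] [CompleteSpace H]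

/-- An operator commuting with a unitary commutes with its adjoint. -/
lemma comm_adjoint_of_comm_unitary {U X : H →L[ℂ] H} (h : X * U = U * X)
    (h1 : adjoint U * U = 1) (h2 : U * adjoint U = 1) :
    X * adjoint U = adjoint U * X := by
  have h3 := congrArg (fun Y : H →L[ℂ] H => adjoint U * Y * adjoint U) h
  simp only [mul_assoc] at h3
  rw [h2, mul_one] at h3
  conv at h3 => rhs; rw [← mul_assoc, ← mul_assoc, h1, one_mul]
  exact h3.symm

/-- Block operator on the Hilbert space direct sum `H ⊕₂ H`. -/
noncomputable def blk (a b c d : H →L[ℂ] H) :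
    WithLp 2 (H × H) →L[ℂ] WithLp 2 (H × H) :=
  (((WithLp.prodContinuousLinearEquiv 2 ℂ H H).symm :
      (H × H) →L[ℂ] WithLp 2 (H × H)).comp
    ((a.coprod b).prod (c.coprod d))).comp
    ((WithLp.prodContinuousLinearEquiv 2 ℂ H H : WithLp 2 (H × H) →L[ℂ] (H × H)))

lemma blk_fst (a b c d : H →L[ℂ] H) (z : WithLp 2 (H × H)) :
    (blk a b c d z).fst = a z.fst + b z.snd := rfl

lemma blk_snd (a b c d : H →L[ℂ] H) (z : WithLp 2 (H × H)) :
    (blk a b c d z).snd = c z.fst + d z.snd := rfl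

lemma wlp_ext {z w : WithLp 2 (H × H)} (h1 : z.fst = w.fst) (h2 : z.snd = w.snd) :
    z = w := congrArg (WithLp.toLp 2) (Prod.ext h1 h2)

lemma blk_mul (a b c d e f g h : H →L[ℂ] H) :
    blk a b c d * blk e f g h
      = blk (a * e + b * g) (a * f + b * h) (c * e + d * g) (c * f + d * h) := by
  ext z
  refine wlp_ext ?_ ?_
  · show (blk a b c d (blk e f g h z)).fst = (blk _ _ _ _ z).fst
    simp [blk_fst, blk_snd, mul_apply, add_apply, map_add]
    abel
  · show (blk a b c d (blk e f g h z)).snd = (blk _ _ _ _ z).snd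
    simp [blk_fst, blk_snd, mul_apply, add_apply, map_add]
    abel

lemma blk_one : (1 : WithLp 2 (H × H) →L[ℂ] WithLp 2 (H × H)) = blk 1 0 0 1 := by
  ext z
  refine wlp_ext ?_ ?_
  · show z.fst = (blk 1 0 0 1 z).fst
    simp [blk_fst]
  · show z.snd = (blk 1 0 0 1 z).snd
    simp [blk_snd]

lemma blk_smul (r : ℂ) (a b c d : H →L[ℂ] H) :
    r • blk a b c d = blk (r • a) (r • b) (r • c) (r • d) := by
  ext z
  refine wlp_ext ?_ ?_
  · show (r • (blk a b c d z)).fst = (blk (r • a) (r • b) (r • c) (r • d) z).fst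
    simp [blk_fst]
  · show (r • (blk a b c d z)).snd = (blk (r • a) (r • b) (r • c) (r • d) z).snd
    simp [blk_snd]

lemma blk_sub (a b c d a' b' c' d' : H →L[ℂ] H) :
    blk a b c d - blk a' b' c' d' = blk (a - a') (b - b') (c - c') (d - d') := by
  ext z
  refine wlp_ext ?_ ?_
  · show (blk a b c d z - blk a' b' c' d' z).fst = (blk _ _ _ _ z).fst
    simp [blk_fst, WithLp.sub_fst]
    abel
  · show (blk a b c d z - blk a' b' c' d' z).snd = (blk _ _ _ _ z).snd
    simp [blk_snd, WithLp.sub_snd]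
    abel

lemma blk_adjoint (a b c d : H →L[ℂ] H) :
    adjoint (blk a b c d) = blk (adjoint a) (adjoint c) (adjoint b) (adjoint d) := by
  symm
  rw [eq_adjoint_iff]
  intro z w
  show inner ℂ (blk (adjoint a) (adjoint c) (adjoint b) (adjoint d) z) w
      = inner ℂ z (blk a b c d w)
  rw [WithLp.prod_inner_apply, WithLp.prod_inner_apply]
  show inner ℂ (blk (adjoint a) (adjoint c) (adjoint b) (adjoint d) z).fst w.fst
      + inner ℂ (blk (adjoint a) (adjoint c) (adjoint b) (adjoint d) z).snd w.snd
      = inner ℂ z.fst (blk a b c d w).fst + inner ℂ z.snd (blk a b c d w).snd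
  rw [blk_fst, blk_snd, blk_fst, blk_snd]
  simp only [inner_add_left, inner_add_right, adjoint_inner_left]
  ring

/-- The isometric embedding of `H` in `H ⊕₂ H` as the first coordinate. -/
noncomputable def Jembed : H →ₗᵢ[ℂ] WithLp 2 (H × H) where
  toLinearMap :=
    (((WithLp.prodContinuousLinearEquiv 2 ℂ H H).symm :
        (H × H) →L[ℂ] WithLp 2 (H × H)).comp (ContinuousLinearMap.inl ℂ H H)).toLinearMap
  norm_map' x := by
    show ‖(WithLp.equiv 2 (H × H)).symm (x, 0)‖ = ‖x‖
    exact WithLp.norm_toLp_fst 2 H H x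

lemma adjoint_zero' : adjoint (0 : H →L[ℂ] H) = 0 := by
  rw [← star_eq_adjoint]; exact star_zero _

lemma Jembed_fst (x : H) : ((Jembed x : WithLp 2 (H × H))).fst = x := rfl
lemma Jembed_snd (x : H) : ((Jembed x : WithLp 2 (H × H))).snd = (0 : H) := rfl

/-- Characterization of quasi pentablock unitaries: a commuting triple `(R₁, R₂, R₃)` is a
quasi pentablock unitary (`R₃` unitary and the triple extends, via an isometric embedding
`J`, to a pentablock unitary `(N₁, N₂, N₃)`) iff `(R₂, R₃)` is a Γ-unitary and
`R₁*R₁ = I - ¼ R₂*R₂`. -/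
theorem statement8 {H : Type u} [NormedAddCommGroup H] [InnerProductSpace ℂ H]
    [CompleteSpace H] (R₁ R₂ R₃ : H →L[ℂ] H)
    (h₁₂ : R₁ * R₂ = R₂ * R₁) (h₁₃ : R₁ * R₃ = R₃ * R₁) (h₂₃ : R₂ * R₃ = R₃ * R₂) :
    ((adjoint R₃ * R₃ = 1 ∧ R₃ * adjoint R₃ = 1) ∧
     ∃ (K : Type u) (_ : NormedAddCommGroup K) (_ : InnerProductSpace ℂ K)
        (_ : CompleteSpace K) (J : H →ₗᵢ[ℂ] K) (N₁ N₂ N₃ : K →L[ℂ] K),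
        N₁ * N₂ = N₂ * N₁ ∧ N₁ * N₃ = N₃ * N₁ ∧ N₂ * N₃ = N₃ * N₂ ∧
        N₁ * adjoint N₁ = adjoint N₁ * N₁ ∧
        N₂ * adjoint N₂ = adjoint N₂ * N₂ ∧
        N₃ * adjoint N₃ = adjoint N₃ * N₃ ∧
        adjoint N₃ * N₃ = 1 ∧ N₃ * adjoint N₃ = 1 ∧
        N₂ = adjoint N₂ * N₃ ∧ ‖N₂‖ ≤ 2 ∧
        adjoint N₁ * N₁ = 1 - (1/4 : ℂ) • (adjoint N₂ * N₂) ∧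
        (∀ x : H, N₁ (J x) = J (R₁ x) ∧ N₂ (J x) = J (R₂ x) ∧ N₃ (J x) = J (R₃ x))) ↔
    (R₂ * adjoint R₂ = adjoint R₂ * R₂ ∧
     R₃ * adjoint R₃ = adjoint R₃ * R₃ ∧
     adjoint R₃ * R₃ = 1 ∧ R₃ * adjoint R₃ = 1 ∧
     R₂ = adjoint R₂ * R₃ ∧ ‖R₂‖ ≤ 2 ∧
     adjoint R₁ * R₁ = 1 - (1/4 : ℂ) • (adjoint R₂ * R₂)) := by
  constructor
  · rintro ⟨⟨hu1, hu2⟩, K, _, _, _, J, N₁, N₂, N₃, h12, h13, h23, hn1, hn2, hn3,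
      hv1, hv2, hΓ, hnorm, hiden, hint⟩
    have hJ1 : ∀ x : H, N₁ (J x) = J (R₁ x) := fun x => (hint x).1
    have hJ2 : ∀ x : H, N₂ (J x) = J (R₂ x) := fun x => (hint x).2.1
    have hJ3 : ∀ x : H, N₃ (J x) = J (R₃ x) := fun x => (hint x).2.2
    have hJ3' : ∀ x : H, adjoint N₃ (J x) = J (adjoint R₃ x) := by
      intro x
      have e1 : N₃ (J (adjoint R₃ x)) = J x := by
        rw [hJ3]
        congr 1
        have e0 := congrArg (fun S : H →L[ℂ] H => S x) hu2
        simpa [ContinuousLinearMap.mul_apply] using e0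
      have e2 := congrArg (fun v => adjoint N₃ v) e1
      rw [← e2, ← ContinuousLinearMap.mul_apply, hv1, ContinuousLinearMap.one_apply]
    have hJ2' : ∀ x : H, adjoint N₂ (J x) = J (adjoint R₃ (R₂ x)) := by
      intro x
      have e3 : adjoint N₂ = adjoint N₃ * N₂ := by
        conv_lhs => rw [hΓ]
        rw [← star_eq_adjoint (adjoint N₂ * N₃), star_mul, star_eq_adjoint,
          star_eq_adjoint, adjoint_adjoint]
      rw [e3, ContinuousLinearMap.mul_apply, hJ2, hJ3']
    have hstar2 : adjoint R₂ = adjoint R₃ * R₂ := by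
      ext x
      apply ext_inner_right ℂ
      intro y
      rw [adjoint_inner_left, ContinuousLinearMap.mul_apply]
      calc (inner ℂ x (R₂ y) : ℂ) = inner ℂ (J x) (J (R₂ y)) := (J.inner_map_map x (R₂ y)).symm
        _ = inner ℂ (J x) (N₂ (J y)) := by rw [hJ2]
        _ = inner ℂ (adjoint N₂ (J x)) (J y) := by rw [adjoint_inner_left]
        _ = inner ℂ (J (adjoint R₃ (R₂ x))) (J y) := by rw [hJ2']
        _ = inner ℂ (adjoint R₃ (R₂ x)) y := J.inner_map_map _ _
    have hc2 : R₂ * adjoint R₃ = adjoint R₃ * R₂ := comm_adjoint_of_comm_unitary h₂₃ hu1 hu2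
    refine ⟨?_, ?_, hu1, hu2, ?_, ?_, ?_⟩
    · rw [hstar2, ← mul_assoc, hc2, mul_assoc]
    · rw [hu1, hu2]
    · symm
      rw [hstar2, mul_assoc, h₂₃, ← mul_assoc, hu1, one_mul]
    · refine opNorm_le_bound _ (by norm_num) fun x => ?_
      have e4 : ‖R₂ x‖ = ‖N₂ (J x)‖ := by rw [hJ2, J.norm_map]
      rw [e4]
      calc ‖N₂ (J x)‖ ≤ ‖N₂‖ * ‖J x‖ := N₂.le_opNorm _
        _ ≤ 2 * ‖x‖ := by
            rw [J.norm_map]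
            exact mul_le_mul_of_nonneg_right hnorm (norm_nonneg x)
    · ext x
      apply ext_inner_right ℂ
      intro y
      rw [ContinuousLinearMap.mul_apply, adjoint_inner_left]
      have key : (inner ℂ ((adjoint N₂ * N₂) (J x)) (J y) : ℂ)
          = inner ℂ ((adjoint R₂ * R₂) x) y := by
        rw [ContinuousLinearMap.mul_apply, ContinuousLinearMap.mul_apply, adjoint_inner_left, adjoint_inner_left, hJ2, hJ2,
          J.inner_map_map]
      calc (inner ℂ (R₁ x) (R₁ y) : ℂ)
          = inner ℂ (J (R₁ x)) (J (R₁ y)) := (J.inner_map_map _ _).symm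
        _ = inner ℂ (N₁ (J x)) (N₁ (J y)) := by rw [hJ1, hJ1]
        _ = inner ℂ ((adjoint N₁ * N₁) (J x)) (J y) := by rw [ContinuousLinearMap.mul_apply, adjoint_inner_left]
        _ = inner ℂ ((1 - (1/4 : ℂ) • (adjoint N₂ * N₂)) (J x)) (J y) := by rw [hiden]
        _ = inner ℂ (J x) (J y)
            - (starRingEnd ℂ) (1/4 : ℂ) * inner ℂ ((adjoint N₂ * N₂) (J x)) (J y) := by
              rw [sub_apply, smul_apply, ContinuousLinearMap.one_apply, inner_sub_left, inner_smul_left]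
        _ = inner ℂ x y - (starRingEnd ℂ) (1/4 : ℂ) * inner ℂ ((adjoint R₂ * R₂) x) y := by
              rw [key, J.inner_map_map]
        _ = inner ℂ ((1 - (1/4 : ℂ) • (adjoint R₂ * R₂)) x) y := by
              rw [sub_apply, smul_apply, ContinuousLinearMap.one_apply, inner_sub_left, inner_smul_left]
  · rintro ⟨hn2, hn3, hu1, hu2, hΓ, hnorm, hP⟩
    -- derived commutation relations
    have hA' : adjoint R₂ = adjoint R₃ * R₂ := by
      have e1 := congrArg (fun S : H →L[ℂ] H => adjoint S) hΓ
      rw [← star_eq_adjoint (adjoint R₂ * R₃), star_mul, star_eq_adjoint, star_eq_adjoint,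
        adjoint_adjoint] at e1
      exact e1
    have hcTU : R₁ * adjoint R₃ = adjoint R₃ * R₁ := comm_adjoint_of_comm_unitary h₁₃ hu1 hu2
    have hcAU : R₂ * adjoint R₃ = adjoint R₃ * R₂ := comm_adjoint_of_comm_unitary h₂₃ hu1 hu2
    have hcTA' : R₁ * adjoint R₂ = adjoint R₂ * R₁ := by
      rw [hA', ← mul_assoc, hcTU, mul_assoc, h₁₂, ← mul_assoc]
    have hcAT' : R₂ * adjoint R₁ = adjoint R₁ * R₂ := by
      have e2 := congrArg (fun S : H →L[ℂ] H => star S) hcTA'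
      simp only [star_mul, star_eq_adjoint, adjoint_adjoint] at e2
      exact e2
    have hcUT' : R₃ * adjoint R₁ = adjoint R₁ * R₃ := by
      have e2 := congrArg (fun S : H →L[ℂ] H => star S) hcTU
      simp only [star_mul, star_eq_adjoint, adjoint_adjoint] at e2
      exact e2
    -- quasinormality of R₁
    have hcP : R₁ * (adjoint R₁ * R₁) = (adjoint R₁ * R₁) * R₁ := by
      rw [hP, mul_sub, sub_mul, mul_one, one_mul]
      congr 1
      rw [mul_smul_comm, smul_mul_assoc]
      congr 1
      rw [← mul_assoc, hcTA', mul_assoc, h₁₂, ← mul_assoc]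
    set M := adjoint R₁ * R₁ - R₁ * adjoint R₁ with hMdef
    have hM0 : 0 ≤ M := by
      have e3 := quasinormal_hyponormal (𝔸 := H →L[ℂ] H) R₁
        (by rw [star_eq_adjoint]; exact hcP)
      rwa [star_eq_adjoint] at e3
    have hMsa : IsSelfAdjoint M := by
      rw [hMdef]
      have : IsSelfAdjoint (star R₁ * R₁ - R₁ * star R₁) :=
        (IsSelfAdjoint.star_mul_self R₁).sub (IsSelfAdjoint.mul_star_self R₁)
      rwa [star_eq_adjoint] at this
    set D := cfc Real.sqrt M with hDdef
    have hDsa : IsSelfAdjoint D := cfc_predicate Real.sqrt M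
    have hDadj : adjoint D = D := by rw [← star_eq_adjoint]; exact hDsa
    have hDD : D * D = M := by
      rw [hDdef, ← cfc_mul Real.sqrt Real.sqrt M (by fun_prop) (by fun_prop)]
      have e4 : (spectrum ℝ M).EqOn (fun x => Real.sqrt x * Real.sqrt x) id := by
        intro x hx
        exact Real.mul_self_sqrt (spectrum_nonneg_of_nonneg hM0 hx)
      rw [cfc_congr e4, cfc_id ℝ M hMsa]
    have hMT : M * R₁ = 0 := by
      rw [hMdef, sub_mul, mul_assoc R₁ (adjoint R₁) R₁, hcP, sub_self]
    have hDT : D * R₁ = 0 := by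
      have h8 : star (D * R₁) * (D * R₁) = 0 := by
        calc star (D * R₁) * (D * R₁) = star R₁ * star D * (D * R₁) := by rw [star_mul]
        _ = star R₁ * (star D * D * R₁) := by simp only [mul_assoc]
        _ = star R₁ * (D * D * R₁) := by rw [hDsa.star_eq]
        _ = star R₁ * (M * R₁) := by rw [hDD]
        _ = 0 := by rw [hMT, mul_zero]
      exact CStarRing.star_mul_self_eq_zero_iff _ |>.mp h8
    have hTD : adjoint R₁ * D = 0 := by
      have h9 := congrArg (fun S : H →L[ℂ] H => star S) hDT
      simp only [star_mul, star_zero, hDsa.star_eq, star_eq_adjoint] at h9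
      exact h9
    have hMA : Commute M R₂ := by
      have c1 : Commute (adjoint R₁) R₂ := hcAT'.symm
      have c2 : Commute R₁ R₂ := h₁₂
      exact ((c1.mul_left c2).sub_left (c2.mul_left c1))
    have hMU : Commute M R₃ := by
      have c1 : Commute (adjoint R₁) R₃ := hcUT'.symm
      have c2 : Commute R₁ R₃ := h₁₃
      exact ((c1.mul_left c2).sub_left (c2.mul_left c1))
    have hDA : D * R₂ = R₂ * D := (commute_cfc_aux R₂ hMA Real.sqrt).eq
    have hDU : D * R₃ = R₃ * D := (commute_cfc_aux R₃ hMU Real.sqrt).eq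
    have hXM : R₁ * adjoint R₁ + M = adjoint R₁ * R₁ := by rw [hMdef]; abel
    have hMX : M + R₁ * adjoint R₁ = adjoint R₁ * R₁ := by rw [hMdef]; abel
    refine ⟨⟨hu1, hu2⟩, WithLp 2 (H × H), inferInstance, inferInstance, inferInstance,
      Jembed, blk R₁ D 0 (adjoint R₁), blk R₂ 0 0 R₂, blk R₃ 0 0 R₃,
      ?_, ?_, ?_, ?_, ?_, ?_, ?_, ?_, ?_, ?_, ?_, ?_⟩
    · rw [blk_mul, blk_mul]
      simp only [mul_zero, zero_mul, add_zero, zero_add]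
      rw [h₁₂, hDA, hcAT']
    · rw [blk_mul, blk_mul]
      simp only [mul_zero, zero_mul, add_zero, zero_add]
      rw [h₁₃, hDU, hcUT']
    · rw [blk_mul, blk_mul]
      simp only [mul_zero, zero_mul, add_zero, zero_add]
      rw [h₂₃]
    · rw [blk_adjoint, adjoint_adjoint, hDadj, adjoint_zero', blk_mul, blk_mul]
      simp only [mul_zero, zero_mul, add_zero, zero_add]
      rw [hDD, hDT, hTD, hXM, hMX]
    · rw [blk_adjoint, adjoint_zero', blk_mul, blk_mul]
      simp only [mul_zero, zero_mul, add_zero, zero_add]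
      rw [hn2]
    · rw [blk_adjoint, adjoint_zero', blk_mul, blk_mul]
      simp only [mul_zero, zero_mul, add_zero, zero_add]
      rw [hn3]
    · rw [blk_adjoint, adjoint_zero', blk_mul]
      simp only [mul_zero, zero_mul, add_zero, zero_add]
      rw [hu1, ← blk_one]
    · rw [blk_adjoint, adjoint_zero', blk_mul]
      simp only [mul_zero, zero_mul, add_zero, zero_add]
      rw [hu2, ← blk_one]
    · rw [blk_adjoint, adjoint_zero', blk_mul]
      simp only [mul_zero, zero_mul, add_zero, zero_add]
      rw [← hΓ]
    · refine opNorm_le_bound _ (by norm_num) fun z => ?_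
      have e5 : ‖blk R₂ 0 0 R₂ z‖ ^ 2 = ‖R₂ z.fst‖ ^ 2 + ‖R₂ z.snd‖ ^ 2 := by
        rw [WithLp.prod_norm_sq_eq_of_L2, blk_fst, blk_snd]
        simp
      have e6 : ‖z‖ ^ 2 = ‖z.fst‖ ^ 2 + ‖z.snd‖ ^ 2 := WithLp.prod_norm_sq_eq_of_L2 z
      have e7 : ‖R₂ z.fst‖ ≤ 2 * ‖z.fst‖ := by
        calc ‖R₂ z.fst‖ ≤ ‖R₂‖ * ‖z.fst‖ := R₂.le_opNorm _
        _ ≤ 2 * ‖z.fst‖ := mul_le_mul_of_nonneg_right hnorm (norm_nonneg _)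
      have e8 : ‖R₂ z.snd‖ ≤ 2 * ‖z.snd‖ := by
        calc ‖R₂ z.snd‖ ≤ ‖R₂‖ * ‖z.snd‖ := R₂.le_opNorm _
        _ ≤ 2 * ‖z.snd‖ := mul_le_mul_of_nonneg_right hnorm (norm_nonneg _)
      nlinarith [norm_nonneg (blk R₂ 0 0 R₂ z), norm_nonneg z, norm_nonneg z.fst,
        norm_nonneg z.snd, norm_nonneg (R₂ z.fst), norm_nonneg (R₂ z.snd)]
    · rw [blk_adjoint, blk_adjoint, adjoint_adjoint, hDadj, adjoint_zero', blk_mul, blk_mul,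
        blk_one, blk_smul, blk_sub]
      simp only [mul_zero, zero_mul, add_zero, zero_add, smul_zero, sub_zero]
      rw [hDD, hDT, hTD, hMX, ← hP]
    · intro x
      refine ⟨wlp_ext ?_ ?_, wlp_ext ?_ ?_, wlp_ext ?_ ?_⟩ <;>
        simp [blk_fst, blk_snd, Jembed_fst, Jembed_snd]
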